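/- Let h_k(u) be defined by h_0 = 0, h_1 = 1, h_k = h_{k−1} + u·h_{k−2}. For an integer j ≥ 3, let u_j = −1/(4 cos²(π/j)) ∈ ℝ. Then h_j(u_j) = 0. -/

import Mathlib

theorem stmt_14 (h : ℕ → ℂ → ℂ)
    (h0 : ∀ u, h 0 u = 0) (h1 : ∀ u, h 1 u = 1)
    (hrec : ∀ u, ∀ k, 2 ≤ k → h k u = h (k - 1) u + u * h (k - 2) u)
    (j : ℕ) (hj : 3 ≤ j) :
    h j ((-1 / (4 * Real.cos (Real.pi / j) ^ 2) : ℝ) : ℂ) = 0 := by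
  set θ : ℝ := Real.pi / j with hθdef
  set c : ℝ := Real.cos θ with hcdef
  set s : ℝ := Real.sin θ with hsdef
  set u : ℝ := -1 / (4 * c ^ 2) with hudef
  have hjpos : (0:ℝ) < j := by
    have : (0:ℕ) < j := by omega
    exact_mod_cast this
  have hθpos : 0 < θ := by
    rw [hθdef]; positivity
  have hθlt : θ < Real.pi / 2 := by
    rw [hθdef]
    apply div_lt_div_of_pos_left Real.pi_pos (by norm_num)
    exact_mod_cast by omega
  have hcpos : 0 < c := Real.cos_pos_of_mem_Ioo ⟨by linarith [Real.pi_pos], hθlt⟩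
  have hspos : 0 < s := Real.sin_pos_of_pos_of_lt_pi hθpos (by linarith [Real.pi_pos])
  have hcne : c ≠ 0 := ne_of_gt hcpos
  have hsne : s ≠ 0 := ne_of_gt hspos
  set f : ℕ → ℝ := fun n => Real.sin (n * θ) * (2 * c) / ((2 * c) ^ n * s) with hfdef
  -- trig identity
  have trig : ∀ n : ℕ, Real.sin ((n + 2 : ℕ) * θ) =
      2 * c * Real.sin ((n + 1 : ℕ) * θ) - Real.sin (n * θ) := by
    intro n
    have e1 : ((n + 2 : ℕ) : ℝ) * θ = ((n + 1 : ℕ) : ℝ) * θ + θ := by push_cast; ring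
    have e2 : (n : ℝ) * θ = ((n + 1 : ℕ) : ℝ) * θ - θ := by push_cast; ring
    rw [e1, e2, Real.sin_add, Real.sin_sub]
    ring
  -- real recurrence
  have key : ∀ n : ℕ, f (n + 2) = f (n + 1) + u * f n := by
    intro n
    simp only [hfdef, hudef]
    rw [trig n]
    field_simp
    ring
  have claim : ∀ n : ℕ, h n ((u : ℝ) : ℂ) = ((f n : ℝ) : ℂ) := by
    intro n
    induction n using Nat.twoStepInduction with
    | zero => simp [h0, hfdef]
    | one =>
      simp only [hfdef]
      rw [h1]
      have : Real.sin ((1:ℕ) * θ) = s := by norm_num [hsdef]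
      rw [this]
      have : s * (2 * c) / ((2 * c) ^ 1 * s) = 1 := by field_simp
      rw [this]; norm_num
    | more n ih1 ih2 =>
      have h2 : 2 ≤ n + 2 := by omega
      rw [hrec _ (n + 2) h2]
      simp only [Nat.add_sub_cancel]
      have e1 : n + 2 - 1 = n + 1 := by omega
      rw [e1, ih2, ih1, key n]
      push_cast
      ring
  have hfu : ((-1 / (4 * Real.cos (Real.pi / j) ^ 2) : ℝ) : ℂ) = ((u : ℝ) : ℂ) := by
    rw [hudef, hcdef, hθdef]
  rw [hfu, claim j]
  have : (j : ℝ) * θ = Real.pi := by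
    rw [hθdef]
    field_simp
  simp [hfdef, this, Real.sin_pi]
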